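/- Let $(v_n)\in\mathcal{GS}(v^*)$, let $(\beta_n)\in\mathcal{GS}(-\beta)$ with $\beta\in(1/2,1]$ and $\beta_n\in(0,1)$ for all $n$, set $\xi=\lim_{n\to\infty}(n\beta_n)^{-1}$ (assumed to exist in $[0,\infty)$), and let $m>0$ satisfy $m-v^*\xi>0$. Then with $Q_n=\prod_{j=1}^n(1-\beta_j)$, one has $\lim_{n\to\infty} v_n Q_n^m \sum_{k=1}^n Q_k^{-m}\frac{\beta_k}{v_k}=\frac{1}{m-v^*\xi}$. -/

import Mathlib

open Filter Finset Real

def GS (γ : ℝ) (v : ℕ → ℝ) : Prop :=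
  (∀ n, 0 < v n) ∧
    Tendsto (fun n : ℕ => (n : ℝ) * (1 - v (n - 1) / v n)) atTop (nhds γ)

lemma stolz (S T : ℕ → ℝ) (L : ℝ)
    (hT : Tendsto T atTop atTop)
    (hmono : ∀ᶠ n in atTop, T n < T (n + 1))
    (hlim : Tendsto (fun n => (S (n + 1) - S n) / (T (n + 1) - T n)) atTop (nhds L)) :
    Tendsto (fun n => S n / T n) atTop (nhds L) := by
  rw [Metric.tendsto_atTop]
  intro ε hε
  have hε2 : 0 < ε / 2 := by linarith
  have h1 : ∀ᶠ n in atTop, |(S (n + 1) - S n) / (T (n + 1) - T n) - L| < ε / 2 := by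
    have := Metric.tendsto_nhds.1 hlim (ε/2) hε2
    simpa [Real.dist_eq] using this
  have h2 : ∀ᶠ n in atTop, (0:ℝ) ≤ T n := hT.eventually (eventually_ge_atTop 0)
  obtain ⟨N, hN⟩ := eventually_atTop.1 (h1.and (hmono.and h2))
  have key : ∀ n, N ≤ n → |S n - S N - L * (T n - T N)| ≤ ε / 2 * (T n - T N) ∧ T N ≤ T n := by
    intro n hn
    induction n with
    | zero => simp_all
    | succ k ih =>
      rcases Nat.eq_or_lt_of_le hn with h | h
      · simp [← h]
      · have hk : N ≤ k := Nat.lt_succ_iff.mp h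
        obtain ⟨ih1, ih2⟩ := ih hk
        obtain ⟨hr, hd, _⟩ := hN k hk
        have hdpos : 0 < T (k+1) - T k := by linarith
        have step : |S (k + 1) - S k - L * (T (k + 1) - T k)| ≤ ε / 2 * (T (k+1) - T k) := by
          have e : S (k+1) - S k - L*(T (k+1) - T k)
              = ((S (k+1) - S k)/(T (k+1) - T k) - L) * (T (k+1) - T k) := by
            field_simp
          rw [e, abs_mul, abs_of_pos hdpos]
          exact mul_le_mul_of_nonneg_right hr.le hdpos.le
        constructor
        · calc |S (k+1) - S N - L * (T (k+1) - T N)|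
              = |(S k - S N - L * (T k - T N)) + (S (k + 1) - S k - L * (T (k + 1) - T k))| := by
                congr 1; ring
            _ ≤ |S k - S N - L * (T k - T N)| + |S (k + 1) - S k - L * (T (k + 1) - T k)| :=
                abs_add_le _ _
            _ ≤ ε / 2 * (T k - T N) + ε / 2 * (T (k+1) - T k) := by gcongr
            _ = ε / 2 * (T (k+1) - T N) := by ring
        · linarith
  -- now choose N' with T n large
  set C := |S N - L * T N| with hC
  have hC0 : 0 ≤ C := abs_nonneg _
  have h3 : ∀ᶠ n in atTop, T n ≥ 2 * C / ε + 1 := hT.eventually (eventually_ge_atTop _)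
  obtain ⟨N', hN'⟩ := eventually_atTop.1 h3
  refine ⟨max N N', fun n hn => ?_⟩
  have hn1 : N ≤ n := le_trans (le_max_left _ _) hn
  have hn2 : N' ≤ n := le_trans (le_max_right _ _) hn
  obtain ⟨k1, k2⟩ := key n hn1
  have hTN : 0 ≤ T N := (hN N le_rfl).2.2
  have hTn : 2 * C / ε + 1 ≤ T n := hN' n hn2
  have hTnpos : 0 < T n := by
    have : 0 ≤ 2 * C / ε := by positivity
    linarith
  rw [Real.dist_eq]
  have e : S n / T n - L = (S n - L * T n) / T n := by field_simp
  rw [e, abs_div, abs_of_pos hTnpos, div_lt_iff₀ hTnpos]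
  have tri : |S n - L * T n| ≤ |S n - S N - L * (T n - T N)| + C := by
    calc |S n - L * T n| = |(S n - S N - L * (T n - T N)) + (S N - L * T N)| := by congr 1; ring
      _ ≤ |S n - S N - L * (T n - T N)| + C := abs_add_le _ _
  have h4 : 2 * C ≤ ε * (T n - 1) := by
    have := (div_le_iff₀ hε).1 (show 2 * C / ε ≤ T n - 1 by linarith)
    linarith
  nlinarith [k1, tri, h4, mul_nonneg hε2.le hTN]

lemma tail_harmonic (N : ℕ) :
    Tendsto (fun n => ∑ i ∈ range n, ((i + N : ℕ) : ℝ)⁻¹) atTop atTop := by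
  rw [← not_summable_iff_tendsto_nat_atTop_of_nonneg (fun n => by positivity)]
  have : ¬ Summable (fun n : ℕ => ((n : ℝ))⁻¹) := Real.not_summable_natCast_inv
  intro h
  exact this ((summable_nat_add_iff N).1 (by exact_mod_cast h))

set_option maxHeartbeats 2000000 in
theorem lemma1_part1 (v β : ℕ → ℝ) (vstar b ξ m : ℝ)
    (hv : GS vstar v) (hβ : GS (-b) β) (hb : b ∈ Set.Ioc (1/2 : ℝ) 1)
    (hβ01 : ∀ n, β n ∈ Set.Ioo (0 : ℝ) 1)
    (hξ : Tendsto (fun n : ℕ => ((n : ℝ) * β n)⁻¹) atTop (nhds ξ))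
    (hξ0 : 0 ≤ ξ) (hm : 0 < m) (hmv : 0 < m - vstar * ξ)
    (Q : ℕ → ℝ) (hQ : ∀ n, Q n = ∏ j ∈ Icc 1 n, (1 - β j)) :
    Tendsto (fun n : ℕ =>
        v n * Q n ^ m * ∑ k ∈ Icc 1 n, Q k ^ (-m) * (β k / v k))
      atTop (nhds (1 / (m - vstar * ξ))) := by
  obtain ⟨hvpos, hvlim⟩ := hv
  obtain ⟨-, hβlim⟩ := hβ
  have hβpos : ∀ n, 0 < β n := fun n => (hβ01 n).1
  have hβlt1 : ∀ n, β n < 1 := fun n => (hβ01 n).2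
  have hb0 : (0:ℝ) < b := lt_trans (by norm_num) hb.1
  have hQpos : ∀ n, 0 < Q n := by
    intro n; rw [hQ]; exact Finset.prod_pos (fun j _ => by linarith [hβlt1 j])
  have hQsucc : ∀ n, Q (n + 1) = Q n * (1 - β (n + 1)) := by
    intro n; rw [hQ, hQ, Finset.prod_Icc_succ_top (Nat.le_add_left 1 n)]
  set L := m - vstar * ξ with hL
  set T : ℕ → ℝ := fun n => Q n ^ (-m) / v n with hTdef
  set Sf : ℕ → ℝ := fun n => ∑ k ∈ Icc 1 n, Q k ^ (-m) * (β k / v k) with hSfdef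
  set cc : ℕ → ℝ := fun n => 1 - v (n + 1) / v n * (1 - β (n + 1)) ^ m with hccdef
  have hTpos : ∀ n, 0 < T n := fun n => div_pos (rpow_pos_of_pos (hQpos n) _) (hvpos n)
  have hstep : ∀ n, T (n + 1) - T n = T (n + 1) * cc n := by
    intro n
    have hβ1 : (0:ℝ) < 1 - β (n+1) := by linarith [hβlt1 (n+1)]
    have h1 : (1 - β (n+1)) ^ (-m) * (1 - β (n+1)) ^ m = 1 := by
      rw [← Real.rpow_add hβ1]; norm_num
    have h2 : Q (n+1) ^ (-m) = Q n ^ (-m) * (1 - β (n+1)) ^ (-m) := by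
      rw [hQsucc n, Real.mul_rpow (hQpos n).le hβ1.le]
    have hv1 := (hvpos n).ne'
    have hv2 := (hvpos (n+1)).ne'
    have key : T (n+1) * (v (n+1) / v n * (1 - β (n+1)) ^ m) = T n := by
      simp only [hTdef, h2]
      field_simp
      linear_combination (Q n ^ (-m)) * h1
    rw [← key]; simp only [hccdef]; ring
  -- shifted hypotheses
  have hv' : Tendsto (fun n : ℕ => ((n + 1 : ℕ) : ℝ) * (1 - v n / v (n + 1))) atTop (nhds vstar) := by
    exact (hvlim.comp (tendsto_add_atTop_nat 1)).congr fun n => by simp [Function.comp]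
  have hβ' : Tendsto (fun n : ℕ => ((n + 1 : ℕ) : ℝ) * (1 - β n / β (n + 1))) atTop (nhds (-b)) := by
    exact (hβlim.comp (tendsto_add_atTop_nat 1)).congr fun n => by simp [Function.comp]
  have hξ' : Tendsto (fun n : ℕ => (((n + 1 : ℕ) : ℝ) * β (n + 1))⁻¹) atTop (nhds ξ) := by
    exact hξ.comp (tendsto_add_atTop_nat 1)
  have hn1 : ∀ n : ℕ, ((n + 1 : ℕ) : ℝ) ≠ 0 := fun n => by positivity
  have hinv0 : Tendsto (fun n : ℕ => ((n + 1 : ℕ) : ℝ)⁻¹) atTop (nhds 0) :=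
    tendsto_inv_atTop_zero.comp (tendsto_natCast_atTop_atTop.comp (tendsto_add_atTop_nat 1))
  -- v (n+1) / v n → 1
  have hvd : Tendsto (fun n : ℕ => 1 - v n / v (n + 1)) atTop (nhds 0) := by
    have h := hv'.mul hinv0
    rw [show vstar * 0 = 0 by ring] at h
    apply h.congr
    intro n
    field_simp
  have hvq : Tendsto (fun n : ℕ => v n / v (n + 1)) atTop (nhds 1) := by
    have h := (tendsto_const_nhds (x := (1:ℝ))).sub hvd
    rw [show (1:ℝ) - 0 = 1 by ring] at h
    apply h.congr; intro n; ring
  have hvratio : Tendsto (fun n : ℕ => v (n + 1) / v n) atTop (nhds 1) := by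
    have h := hvq.inv₀ one_ne_zero
    rw [inv_one] at h
    apply h.congr; intro n; rw [inv_div]
  -- β → 0
  have hβ0 : Tendsto β atTop (nhds 0) := by
    obtain ⟨N, hN⟩ := eventually_atTop.1 (hβ'.eventually_le_const (by linarith : -b < -(b/2)))
    have hrec : ∀ n, N ≤ n → β (n + 1) * (1 + b / 2 / ((n + 1 : ℕ) : ℝ)) ≤ β n := by
      intro n hn
      have h := hN n hn
      have hnp : (0:ℝ) < ((n + 1 : ℕ) : ℝ) := by positivity
      have h2 : 1 - β n / β (n + 1) ≤ -(b/2) / ((n + 1 : ℕ) : ℝ) := by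
        rw [le_div_iff₀ hnp]; linarith [mul_comm (((n + 1 : ℕ) : ℝ)) (1 - β n / β (n + 1))]
      have h3 : 1 + b / 2 / ((n + 1 : ℕ) : ℝ) ≤ β n / β (n + 1) := by
        have : -(b/2) / ((n + 1 : ℕ) : ℝ) = -(b / 2 / ((n + 1 : ℕ) : ℝ)) := by ring
        rw [this] at h2; linarith
      calc β (n + 1) * (1 + b / 2 / ((n + 1 : ℕ) : ℝ)) ≤ β (n + 1) * (β n / β (n + 1)) := by
            apply mul_le_mul_of_nonneg_left h3 (hβpos (n+1)).le
        _ = β n := by rw [mul_comm, div_mul_cancel₀ _ (hβpos (n+1)).ne']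
    have hcl : ∀ k, β (N + k) * (1 + b / 2 * ∑ i ∈ range k, ((i + (N + 1) : ℕ) : ℝ)⁻¹) ≤ β N := by
      intro k
      induction k with
      | zero => simp
      | succ j ih =>
        have hr := hrec (N + j) (Nat.le_add_right _ _)
        have hsum0 : (0:ℝ) ≤ ∑ i ∈ range j, ((i + (N + 1) : ℕ) : ℝ)⁻¹ :=
          Finset.sum_nonneg fun i _ => by positivity
        have e1 : ((N + j + 1 : ℕ) : ℝ) = ((j + (N + 1) : ℕ) : ℝ) := by norm_cast; ring
        rw [Finset.sum_range_succ, show N + (j + 1) = (N + j) + 1 from rfl]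
        have hβj := hβpos (N + j + 1)
        have hgp : (0:ℝ) < ((j + (N + 1) : ℕ) : ℝ)⁻¹ := by positivity
        -- β (N+j+1) * (1 + b/2 * (S + g)) ≤ β (N+j+1) * (1 + b/2/(N+j+1)) * (1 + b/2*S) ≤ β (N+j) * (1 + b/2*S) ≤ β N
        have hmul : β (N + j + 1) * (1 + b / 2 * (∑ i ∈ range j, ((i + (N + 1) : ℕ) : ℝ)⁻¹ + ((j + (N + 1) : ℕ) : ℝ)⁻¹))
            ≤ (β (N + j + 1) * (1 + b / 2 / ((N + j + 1 : ℕ) : ℝ))) * (1 + b / 2 * ∑ i ∈ range j, ((i + (N + 1) : ℕ) : ℝ)⁻¹) := by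
          rw [e1]
          have expand : (β (N + j + 1) * (1 + b / 2 / ((j + (N + 1) : ℕ) : ℝ))) * (1 + b / 2 * ∑ i ∈ range j, ((i + (N + 1) : ℕ) : ℝ)⁻¹)
              = β (N + j + 1) * (1 + b / 2 * (∑ i ∈ range j, ((i + (N + 1) : ℕ) : ℝ)⁻¹ + ((j + (N + 1) : ℕ) : ℝ)⁻¹))
                + β (N + j + 1) * ((b / 2 * ((j + (N + 1) : ℕ) : ℝ)⁻¹) * (b / 2 * ∑ i ∈ range j, ((i + (N + 1) : ℕ) : ℝ)⁻¹)) := by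
            field_simp
            ring
          rw [expand]
          nlinarith [mul_nonneg (mul_nonneg (by linarith : (0:ℝ) ≤ b/2) hgp.le) (mul_nonneg (by linarith : (0:ℝ) ≤ b/2) hsum0), hβj.le,
            mul_nonneg hβj.le (mul_nonneg (mul_nonneg (by linarith : (0:ℝ) ≤ b/2) hgp.le) (mul_nonneg (by linarith : (0:ℝ) ≤ b/2) hsum0))]
        calc β (N + j + 1) * (1 + b / 2 * (∑ i ∈ range j, ((i + (N + 1) : ℕ) : ℝ)⁻¹ + ((j + (N + 1) : ℕ) : ℝ)⁻¹))
            ≤ (β (N + j + 1) * (1 + b / 2 / ((N + j + 1 : ℕ) : ℝ))) * (1 + b / 2 * ∑ i ∈ range j, ((i + (N + 1) : ℕ) : ℝ)⁻¹) := hmul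
          _ ≤ β (N + j) * (1 + b / 2 * ∑ i ∈ range j, ((i + (N + 1) : ℕ) : ℝ)⁻¹) := by
              apply mul_le_mul_of_nonneg_right hr
              nlinarith [hsum0]
          _ ≤ β N := ih
    -- squeeze
    have hden : Tendsto (fun k => 1 + b / 2 * ∑ i ∈ range k, ((i + (N + 1) : ℕ) : ℝ)⁻¹) atTop atTop := by
      apply tendsto_atTop_add_const_left
      exact (tail_harmonic (N + 1)).const_mul_atTop (by linarith : (0:ℝ) < b / 2)
    have hbound : Tendsto (fun k => β N * (1 + b / 2 * ∑ i ∈ range k, ((i + (N + 1) : ℕ) : ℝ)⁻¹)⁻¹) atTop (nhds 0) := by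
      have := hden.inv_tendsto_atTop
      have h2 := this.const_mul (β N)
      rw [mul_zero] at h2
      exact h2
    have hsq : Tendsto (fun k => β (N + k)) atTop (nhds 0) := by
      apply tendsto_of_tendsto_of_tendsto_of_le_of_le' tendsto_const_nhds hbound
      · exact Eventually.of_forall fun k => (hβpos _).le
      · apply Eventually.of_forall
        intro k
        have hdpos : (0:ℝ) < 1 + b / 2 * ∑ i ∈ range k, ((i + (N + 1) : ℕ) : ℝ)⁻¹ := by
          have : (0:ℝ) ≤ ∑ i ∈ range k, ((i + (N + 1) : ℕ) : ℝ)⁻¹ :=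
            Finset.sum_nonneg fun i _ => by positivity
          nlinarith
        have h := (le_div_iff₀ hdpos).2 (hcl k)
        rw [div_eq_mul_inv] at h
        exact h
    rw [← tendsto_add_atTop_iff_nat N]
    exact hsq.congr fun k => by rw [Nat.add_comm]
  have hβ1 : Tendsto (fun n : ℕ => β (n + 1)) atTop (nhds 0) := hβ0.comp (tendsto_add_atTop_nat 1)
  -- A : (1 - (1-β(n+1))^m)/β(n+1) → m
  have hA : Tendsto (fun n : ℕ => (1 - (1 - β (n + 1)) ^ m) / β (n + 1)) atTop (nhds m) := by
    have hder : HasDerivAt (fun x : ℝ => (1 - x) ^ m) (-m) 0 := by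
      have h1 : HasDerivAt (fun x : ℝ => 1 - x) (-1) 0 := (hasDerivAt_id 0).const_sub 1
      have h2 : HasDerivAt (fun y : ℝ => y ^ m) (m * (1:ℝ) ^ (m - 1)) ((fun x : ℝ => 1 - x) 0) := by
        simpa using Real.hasDerivAt_rpow_const (x := (1:ℝ)) (p := m) (Or.inl one_ne_zero)
      have h3 := h2.comp 0 h1
      rw [Real.one_rpow, mul_neg_one, mul_one] at h3; exact h3
    have hslope := hasDerivAt_iff_tendsto_slope.1 hder
    have hβin : Tendsto (fun n : ℕ => β (n + 1)) atTop (nhdsWithin 0 {(0:ℝ)}ᶜ) := by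
      apply tendsto_nhdsWithin_of_tendsto_nhds_of_eventually_within _ hβ1
      exact Eventually.of_forall fun n => (hβpos (n + 1)).ne'
    have hcomp := hslope.comp hβin
    have := hcomp.neg
    rw [neg_neg] at this
    apply this.congr
    intro n
    simp only [Function.comp_apply, slope_def_field]
    rw [show (1:ℝ) - 0 = 1 by ring, Real.one_rpow, sub_zero, ← neg_div, neg_sub]
  -- B : (1 - β(n+1))^m → 1
  have hB : Tendsto (fun n : ℕ => (1 - β (n + 1)) ^ m) atTop (nhds 1) := by
    have h1 : Tendsto (fun n : ℕ => 1 - β (n + 1)) atTop (nhds 1) := by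
      have := (tendsto_const_nhds (x := (1:ℝ))).sub hβ1
      rw [sub_zero] at this
      exact this
    have hc : ContinuousAt (fun x : ℝ => x ^ m) 1 :=
      Real.continuousAt_rpow_const 1 m (Or.inl one_ne_zero)
    have := hc.tendsto.comp h1
    rw [Real.one_rpow] at this
    exact this
  -- C : (1 - v(n+1)/v n)/β(n+1) → -(vstar * ξ)
  have hC : Tendsto (fun n : ℕ => (1 - v (n + 1) / v n) / β (n + 1)) atTop (nhds (-(vstar * ξ))) := by
    have hprod := (hvratio.neg.mul hv').mul hξ'
    rw [show -(1:ℝ) * vstar * ξ = -(vstar * ξ) by ring] at hprod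
    apply hprod.congr
    intro n
    have h1 := (hvpos n).ne'
    have h2 := (hvpos (n + 1)).ne'
    have h3 := (hβpos (n + 1)).ne'
    field_simp
    ring
  -- w : cc n / β (n+1) → L
  have hw : Tendsto (fun n : ℕ => cc n / β (n + 1)) atTop (nhds L) := by
    have h := hA.add (hB.mul hC)
    rw [show m + 1 * -(vstar * ξ) = L by rw [hL]; ring] at h
    apply h.congr
    intro n
    simp only [hccdef]
    have h3 := (hβpos (n + 1)).ne'
    field_simp
    ring
  -- eventual lower bounds
  have hccev : ∀ᶠ n in atTop, L / 2 < cc n / β (n + 1) :=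
    hw.eventually (eventually_gt_nhds (by linarith))
  have hβlb : ∀ᶠ n : ℕ in atTop, ((ξ + 1) * ((n:ℝ) + 1))⁻¹ ≤ β (n + 1) := by
    filter_upwards [Tendsto.eventually_le_const (by linarith : ξ < ξ + 1) hξ'] with n h
    have hx : (0:ℝ) < ((n + 1 : ℕ) : ℝ) * β (n + 1) := mul_pos (by positivity) (hβpos _)
    have h1 : 1 ≤ (ξ + 1) * (((n + 1 : ℕ) : ℝ) * β (n + 1)) := by
      have := mul_le_mul_of_nonneg_right h hx.le
      rw [inv_mul_cancel₀ hx.ne'] at this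
      linarith
    rw [show ((ξ + 1) * ((n:ℝ) + 1))⁻¹ = 1 / ((ξ + 1) * ((n:ℝ) + 1)) from (one_div _).symm,
      div_le_iff₀ (by positivity)]
    push_cast at h1 ⊢
    nlinarith
  obtain ⟨N₃, hN₃⟩ := eventually_atTop.1 (hccev.and hβlb)
  have hccpos : ∀ n, N₃ ≤ n → (L / 2) * β (n + 1) ≤ cc n := by
    intro n hn
    have := (hN₃ n hn).1
    exact ((lt_div_iff₀ (hβpos (n + 1))).1 this).le
  have hmono : ∀ᶠ n in atTop, T n < T (n + 1) := by
    filter_upwards [eventually_ge_atTop N₃] with n hn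
    have h1 : 0 < cc n := lt_of_lt_of_le (mul_pos (half_pos hmv) (hβpos (n+1))) (hccpos n hn)
    nlinarith [hstep n, hTpos (n + 1)]
  -- T tends to atTop
  have hTtop : Tendsto T atTop atTop := by
    set c' : ℝ := L / 2 * (ξ + 1)⁻¹ with hc'
    have hc'pos : 0 < c' := mul_pos (half_pos hmv) (by positivity)
    have hcl : ∀ k, T N₃ * (1 + c' * ∑ i ∈ range k, ((i + (N₃ + 1) : ℕ) : ℝ)⁻¹) ≤ T (N₃ + k) := by
      intro k
      induction k with
      | zero => simp
      | succ j ih =>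
        have hsum0 : (0:ℝ) ≤ ∑ i ∈ range j, ((i + (N₃ + 1) : ℕ) : ℝ)⁻¹ :=
          Finset.sum_nonneg fun i _ => by positivity
        obtain ⟨hc1, hc2⟩ := hN₃ (N₃ + j) (Nat.le_add_right _ _)
        have hccj : (L / 2) * β (N₃ + j + 1) ≤ cc (N₃ + j) := hccpos _ (Nat.le_add_right _ _)
        have hccj0 : 0 ≤ cc (N₃ + j) :=
          le_trans (mul_pos (half_pos hmv) (hβpos _)).le hccj
        have hTm : T (N₃ + j) ≤ T (N₃ + j + 1) := by
          have h1 := mul_nonneg (hTpos (N₃ + j + 1)).le hccj0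
          linarith [hstep (N₃ + j)]
        have hTNle : T N₃ ≤ T (N₃ + j) := by
          have : T N₃ * 1 ≤ T N₃ * (1 + c' * ∑ i ∈ range j, ((i + (N₃ + 1) : ℕ) : ℝ)⁻¹) := by
            apply mul_le_mul_of_nonneg_left _ (hTpos N₃).le
            have := mul_nonneg hc'pos.le hsum0
            linarith
          rw [mul_one] at this
          exact this.trans ih
        -- the step gain
        have hgain : T N₃ * (c' * ((j + (N₃ + 1) : ℕ) : ℝ)⁻¹) ≤ T (N₃ + j + 1) - T (N₃ + j) := by
          rw [hstep (N₃ + j)]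
          have hβb : (c' / (L / 2)) * ((j + (N₃ + 1) : ℕ) : ℝ)⁻¹ ≤ β (N₃ + j + 1) := by
            have e1 : ((ξ + 1) * (((N₃ + j : ℕ) : ℝ) + 1))⁻¹
                = (c' / (L / 2)) * ((j + (N₃ + 1) : ℕ) : ℝ)⁻¹ := by
              rw [hc', div_eq_mul_inv,
                show L / 2 * (ξ + 1)⁻¹ * (L / 2)⁻¹ * ((j + (N₃ + 1) : ℕ) : ℝ)⁻¹
                  = (L / 2 * (L / 2)⁻¹) * ((ξ + 1)⁻¹ * ((j + (N₃ + 1) : ℕ) : ℝ)⁻¹) by ring,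
                mul_inv_cancel₀ (half_pos hmv).ne', one_mul, ← mul_inv]
              congr 2
              push_cast; ring
            rw [← e1]; exact hc2
          calc T N₃ * (c' * ((j + (N₃ + 1) : ℕ) : ℝ)⁻¹)
              = T N₃ * ((L / 2) * ((c' / (L / 2)) * ((j + (N₃ + 1) : ℕ) : ℝ)⁻¹)) := by
                field_simp
            _ ≤ T N₃ * ((L / 2) * β (N₃ + j + 1)) := by
                apply mul_le_mul_of_nonneg_left _ (hTpos N₃).le
                apply mul_le_mul_of_nonneg_left hβb (half_pos hmv).le
            _ ≤ T (N₃ + j) * cc (N₃ + j) := by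
                apply mul_le_mul hTNle hccj (mul_pos (half_pos hmv) (hβpos _)).le (hTpos _).le
            _ ≤ T (N₃ + j + 1) * cc (N₃ + j) := by
                apply mul_le_mul_of_nonneg_right hTm hccj0
        rw [Finset.sum_range_succ, show N₃ + (j + 1) = (N₃ + j) + 1 from rfl]
        have exp1 : T N₃ * (1 + c' * (∑ i ∈ range j, ((i + (N₃ + 1) : ℕ) : ℝ)⁻¹ + ((j + (N₃ + 1) : ℕ) : ℝ)⁻¹))
            = T N₃ * (1 + c' * ∑ i ∈ range j, ((i + (N₃ + 1) : ℕ) : ℝ)⁻¹)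
              + T N₃ * (c' * ((j + (N₃ + 1) : ℕ) : ℝ)⁻¹) := by ring
        rw [exp1]
        linarith [hgain, ih]
    have hden : Tendsto (fun k => T N₃ * (1 + c' * ∑ i ∈ range k, ((i + (N₃ + 1) : ℕ) : ℝ)⁻¹)) atTop atTop := by
      apply Tendsto.const_mul_atTop (hTpos N₃)
      apply tendsto_atTop_add_const_left
      exact (tail_harmonic (N₃ + 1)).const_mul_atTop hc'pos
    have h1 : Tendsto (fun k => T (N₃ + k)) atTop atTop := tendsto_atTop_mono hcl hden
    rw [← tendsto_add_atTop_iff_nat N₃]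
    exact h1.congr fun k => by rw [Nat.add_comm]
  -- the ratio limit
  have hlim : Tendsto (fun n => (Sf (n + 1) - Sf n) / (T (n + 1) - T n)) atTop (nhds L⁻¹) := by
    have hwi : Tendsto (fun n : ℕ => (cc n / β (n + 1))⁻¹) atTop (nhds L⁻¹) :=
      hw.inv₀ hmv.ne'
    apply hwi.congr'
    filter_upwards [eventually_ge_atTop N₃] with n hn
    have hccn : 0 < cc n := lt_of_lt_of_le (mul_pos (half_pos hmv) (hβpos (n+1))) (hccpos n hn)
    have hSstep : Sf (n + 1) - Sf n = T (n + 1) * β (n + 1) := by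
      simp only [hSfdef]
      rw [Finset.sum_Icc_succ_top (Nat.le_add_left 1 n)]
      simp only [hTdef]
      ring
    rw [inv_div, hSstep, hstep n, mul_div_mul_left _ _ (hTpos (n+1)).ne']
  -- apply Stolz
  have hmain := stolz Sf T L⁻¹ hTtop hmono hlim
  rw [show (1 : ℝ) / (m - vstar * ξ) = L⁻¹ by rw [hL, one_div]]
  apply hmain.congr
  intro n
  have hQm : (0:ℝ) < Q n ^ m := rpow_pos_of_pos (hQpos n) m
  simp only [hTdef, hSfdef]
  rw [Real.rpow_neg (hQpos n).le]
  field_simp
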